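/- Let I = (x_1x_2, x_2x_3, ..., x_{2t-2}x_{2t-1}, x_{2t-1}x_1) be the edge ideal of the odd cycle on 2t-1 vertices in R = k[x_1,...,x_{2t-1}], where t ≥ 2. Then the monomial x_1 x_2 ⋯ x_{2t-1} belongs to the symbolic power I^{(t)} but not to the ordinary power I^t; in particular I^{(t)} ≠ I^t. -/

import Mathlib

open MvPolynomial

lemma odd_cycle_aux_mem_pow (k : Type*) [Field k] (t d : ℕ)
    (ht : 2 ≤ t) (hd : d = 2 * t - 1)
    (I : Ideal (MvPolynomial (Fin d) k))
    (hI : I = Ideal.span {f : MvPolynomial (Fin d) k |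
      ∃ i : Fin d, f = X i * X ⟨((i : ℕ) + 1) % d, Nat.mod_lt _ (Nat.pos_of_ne_zero (by omega))⟩})
    (P : Ideal (MvPolynomial (Fin d) k)) (hP : P ∈ I.minimalPrimes) :
    (∏ i : Fin d, X i : MvPolynomial (Fin d) k) ∈ P ^ t := by
  classical
  obtain ⟨⟨hprime, hle⟩, -⟩ := hP
  have hd3 : 3 ≤ d := by omega
  have hcov : ∀ i : Fin d, X i ∈ P ∨
      X (⟨((i : ℕ) + 1) % d, Nat.mod_lt _ (by omega)⟩ : Fin d) ∈ P := by
    intro i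
    apply hprime.mem_or_mem
    apply hle
    rw [hI]
    exact Ideal.subset_span ⟨i, rfl⟩
  set S : Finset (Fin d) := Finset.univ.filter (fun i => X i ∈ P) with hS
  have hch : ∀ i : Fin d, ∃ v : Fin d, v ∈ S ∧ ((v : ℕ) = i ∨ (v : ℕ) = ((i : ℕ) + 1) % d) := by
    intro i
    rcases hcov i with h | h
    · exact ⟨i, Finset.mem_filter.2 ⟨Finset.mem_univ _, h⟩, Or.inl rfl⟩
    · exact ⟨_, Finset.mem_filter.2 ⟨Finset.mem_univ _, h⟩, Or.inr rfl⟩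
  choose f hfS hfval using hch
  have hcard : (Finset.univ : Finset (Fin d)).card ≤ 2 * S.card := by
    apply Finset.card_le_mul_card_image_of_maps_to (fun i _ => hfS i) 2
    intro v hv
    have hsub : {i ∈ (Finset.univ : Finset (Fin d)) | f i = v} ⊆
        {v, (⟨((v : ℕ) + d - 1) % d, Nat.mod_lt _ (by omega)⟩ : Fin d)} := by
      intro i hi
      rw [Finset.mem_filter] at hi
      rcases hfval i with h | h
      · rw [hi.2] at h
        have : i = v := Fin.ext h.symm
        simp [this]
      · rw [hi.2] at h
        have hi1 : (i : ℕ) < d := i.isLt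
        have hv1 : (v : ℕ) < d := v.isLt
        have hiv : (i : ℕ) = ((v : ℕ) + d - 1) % d := by
          rcases Nat.lt_or_ge ((i : ℕ) + 1) d with hlt | hge
          · have hv' : (v : ℕ) = (i : ℕ) + 1 := by rw [h, Nat.mod_eq_of_lt hlt]
            have he : (v : ℕ) + d - 1 = d + (i : ℕ) := by omega
            rw [he, Nat.add_mod_left, Nat.mod_eq_of_lt hi1]
          · have hid : (i : ℕ) + 1 = d := by omega
            have hv' : (v : ℕ) = 0 := by
              rw [h, hid, Nat.mod_self]
            rw [hv', Nat.zero_add, Nat.mod_eq_of_lt (by omega)]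
            omega
        exact Finset.mem_insert_of_mem (Finset.mem_singleton.2 (Fin.ext hiv))
    exact le_trans (Finset.card_le_card hsub) (le_trans (Finset.card_insert_le _ _) (by simp))
  have hScard : t ≤ S.card := by
    simp only [Finset.card_univ, Fintype.card_fin] at hcard
    omega
  obtain ⟨S', hS'sub, hS'card⟩ := Finset.exists_subset_card_eq hScard
  have hprod : (∏ i ∈ S', X i : MvPolynomial (Fin d) k) ∈ P ^ t := by
    rw [← hS'card]
    clear hS'card
    induction S' using Finset.cons_induction with
    | empty => simp [Ideal.one_eq_top]
    | cons i s hi ih =>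
      rw [Finset.prod_cons, Finset.card_cons, pow_succ']
      refine Ideal.mul_mem_mul ?_ (ih (le_trans (Finset.subset_cons _) hS'sub))
      have := hS'sub (Finset.mem_cons_self i s)
      exact (Finset.mem_filter.1 this).2
  rw [← Finset.prod_mul_prod_compl S' (fun i => (X i : MvPolynomial (Fin d) k))]
  exact Ideal.mul_mem_right _ _ hprod

lemma odd_cycle_aux_not_mem (k : Type*) [Field k] (t d : ℕ)
    (ht : 2 ≤ t) (hd : d = 2 * t - 1)
    (I : Ideal (MvPolynomial (Fin d) k))
    (hI : I = Ideal.span {f : MvPolynomial (Fin d) k |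
      ∃ i : Fin d, f = X i * X ⟨((i : ℕ) + 1) % d, Nat.mod_lt _ (Nat.pos_of_ne_zero (by omega))⟩}) :
    (∏ i : Fin d, X i : MvPolynomial (Fin d) k) ∉ I ^ t := by
  intro hmem
  set φ : MvPolynomial (Fin d) k →+* Polynomial k :=
    (aeval (fun _ : Fin d => (Polynomial.X : Polynomial k))).toRingHom with hφ
  have h1 : φ (∏ i : Fin d, X i) = Polynomial.X ^ d := by
    simp [φ, map_prod, Finset.prod_const]
  have h2 : Ideal.map φ I ≤ Ideal.span {(Polynomial.X : Polynomial k) ^ 2} := by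
    rw [hI, Ideal.map_span, Ideal.span_le]
    rintro f ⟨g, ⟨i, rfl⟩, rfl⟩
    simp only [φ, AlgHom.toRingHom_eq_coe, RingHom.coe_coe, map_mul, aeval_X]
    rw [← sq]
    exact Ideal.subset_span rfl
  have h3 : φ (∏ i : Fin d, X i) ∈ Ideal.span {(Polynomial.X : Polynomial k) ^ (2 * t)} := by
    have : φ (∏ i : Fin d, X i) ∈ (Ideal.map φ I) ^ t := by
      rw [← Ideal.map_pow]
      exact Ideal.mem_map_of_mem φ hmem
    have h4 := (Ideal.pow_right_mono h2 t) this
    rwa [Ideal.span_singleton_pow, ← pow_mul] at h4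
  rw [h1, Ideal.mem_span_singleton, Polynomial.X_pow_dvd_iff] at h3
  have := h3 d (by omega)
  simp at this

/-- let `I` be the edge ideal of the odd cycle on `d = 2t - 1` vertices
(`t ≥ 2`) in `R = k[x_1,…,x_{2t-1}]`, i.e. `I = (x_1x_2, x_2x_3, …, x_{2t-1}x_1)`.
Then the monomial `x_1 x_2 ⋯ x_{2t-1}` belongs to the symbolic power
`I^{(t)} = ⋂_{P ∈ Min(I)} P^t` but not to the ordinary power `I^t`; in particular
`I^{(t)} ≠ I^t`. -/
theorem odd_cycle_symbolic_ne_ordinary (k : Type*) [Field k] (t d : ℕ)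
    (ht : 2 ≤ t) (hd : d = 2 * t - 1)
    (I : Ideal (MvPolynomial (Fin d) k))
    (hI : I = Ideal.span {f : MvPolynomial (Fin d) k |
      ∃ i : Fin d, f = X i * X ⟨((i : ℕ) + 1) % d, Nat.mod_lt _ (by omega)⟩}) :
    ((∏ i : Fin d, X i : MvPolynomial (Fin d) k) ∈
        ⨅ P : I.minimalPrimes, (P : Ideal (MvPolynomial (Fin d) k)) ^ t) ∧
      (∏ i : Fin d, X i : MvPolynomial (Fin d) k) ∉ I ^ t ∧
      (⨅ P : I.minimalPrimes, (P : Ideal (MvPolynomial (Fin d) k)) ^ t) ≠ I ^ t := by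
  have h1 : (∏ i : Fin d, X i : MvPolynomial (Fin d) k) ∈
      ⨅ P : I.minimalPrimes, (P : Ideal (MvPolynomial (Fin d) k)) ^ t :=
    Submodule.mem_iInf _ |>.2 fun P => odd_cycle_aux_mem_pow k t d ht hd I hI P.1 P.2
  have h2 := odd_cycle_aux_not_mem k t d ht hd I hI
  exact ⟨h1, h2, fun heq => h2 (heq ▸ h1)⟩
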